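/- Let φ be a GFG-QPTL formula and 𝔄₁, 𝔄₂ hyperassignments with 𝔄₁ ≡ 𝔄₂. Then, for each alternation flag α ∈ {EA, AE}: 𝔄₁ ⊨^α φ if and only if 𝔄₂ ⊨^α φ. (Corollary 1, Hyperassignment Equivalence.) -/

import Mathlib

namespace GFG

/-- Temporal valuations. -/
abbrev Val : Type := ℕ → Bool

/-- Assignments over a type `AP` of atomic propositions. -/
abbrev Asg (AP : Type*) : Type _ := AP → Val

section Hyper

variable {X : Type*}

/-- A hyperassignment: a nonempty set of subsets not containing `∅`. -/
def IsHyp (𝔄 : Set (Set X)) : Prop := 𝔄 ≠ ∅ ∧ ∅ ∉ 𝔄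

/-- A choice function for `𝔄`. -/
def IsChoice (𝔄 : Set (Set X)) (ϑ : Set X → X) : Prop := ∀ W ∈ 𝔄, ϑ W ∈ W

/-- The dual hyperassignment. -/
def hdual (𝔄 : Set (Set X)) : Set (Set X) :=
  { Y | ∃ ϑ : Set X → X, IsChoice 𝔄 ϑ ∧ Y = ϑ '' 𝔄 }

/-- The preorder `⊑` on hyperassignments. -/
def hle (𝔄₁ 𝔄₂ : Set (Set X)) : Prop := ∀ W₁ ∈ 𝔄₁, ∃ W₂ ∈ 𝔄₂, W₂ ⊆ W₁

/-- The equivalence `≡` on hyperassignments. -/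
def heqv (𝔄₁ 𝔄₂ : Set (Set X)) : Prop := hle 𝔄₁ 𝔄₂ ∧ hle 𝔄₂ 𝔄₁

/-- `par 𝔄`: partitions of `𝔄` into two disjoint parts. -/
def par (𝔄 : Set (Set X)) : Set (Set (Set X) × Set (Set X)) :=
  { pr | pr.1 ∪ pr.2 = 𝔄 ∧ Disjoint pr.1 pr.2 }

end Hyper

variable {AP : Type*}

/-- `a₁ ≈_p^{>k} a₂`. -/
def ApproxGT (p : AP) (k : ℕ) (a₁ a₂ : Asg AP) : Prop :=
  (∀ q, q ≠ p → a₁ q = a₂ q) ∧ ∀ t ≤ k, a₁ p t = a₂ p t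

/-- `a₁ ≈_p^{≥k} a₂`. -/
def ApproxGE (p : AP) (k : ℕ) (a₁ a₂ : Asg AP) : Prop :=
  (∀ q, q ≠ p → a₁ q = a₂ q) ∧ ∀ t < k, a₁ p t = a₂ p t

/-- Quantifier specifications `ς = (B,S)`. -/
abbrev Spec (AP : Type*) := Set AP × Set AP

/-- A `ς`-functor. -/
def IsSpecFunctor (ς : Spec AP) (F : Asg AP → Val) : Prop :=
  (∀ (k : ℕ) (a₁ a₂ : Asg AP), (∃ p ∈ ς.1, ApproxGT p k a₁ a₂) → F a₁ k = F a₂ k) ∧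
  (∀ (k : ℕ) (a₁ a₂ : Asg AP), (∃ p ∈ ς.2, ApproxGE p k a₁ a₂) → F a₁ k = F a₂ k)

variable [DecidableEq AP]

/-- `ext(a,F,p)`. -/
def extAsg (a : Asg AP) (F : Asg AP → Val) (p : AP) : Asg AP :=
  Function.update a p (F a)

/-- `ext(W,F,p)`. -/
def extSet (W : Set (Asg AP)) (F : Asg AP → Val) (p : AP) : Set (Asg AP) :=
  (fun a => extAsg a F p) '' W

/-- `ext_ς(𝔄,p)`. -/
def extSpec (ς : Spec AP) (𝔄 : Set (Set (Asg AP))) (p : AP) : Set (Set (Asg AP)) :=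
  { Y | ∃ W ∈ 𝔄, ∃ F : Asg AP → Val, IsSpecFunctor ς F ∧ Y = extSet W F p }

/-- Alternation flags. -/
inductive Flag : Type
  | EA : Flag
  | AE : Flag
  deriving DecidableEq

/-- The dual flag. -/
def Flag.dual : Flag → Flag
  | .EA => .AE
  | .AE => .EA

/-- GFG-QPTL formulas (LTL formulas abstracted as arbitrary sets of assignments). -/
inductive Formula (AP : Type*) : Type _ where
  | atom : Set (Asg AP) → Formula AP
  | neg : Formula AP → Formula AP
  | conj : Formula AP → Formula AP → Formula AP
  | disj : Formula AP → Formula AP → Formula AP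
  | ex : AP → Spec AP → Formula AP → Formula AP
  | all : AP → Spec AP → Formula AP → Formula AP

/-- The alternating Hodges semantics `𝔄 ⊨^α φ`. -/
def Sat : Formula AP → Flag → Set (Set (Asg AP)) → Prop
  | .atom Ψ, .EA, 𝔄 => ∃ W ∈ 𝔄, W ⊆ Ψ
  | .atom Ψ, .AE, 𝔄 => ∀ W ∈ 𝔄, W ∩ Ψ ≠ ∅
  | .neg φ, α, 𝔄 => ¬ Sat φ α.dual 𝔄
  | .conj φ₁ φ₂, .EA, 𝔄 =>
      ∀ pr ∈ par 𝔄, (pr.1 ≠ ∅ ∧ Sat φ₁ .EA pr.1) ∨ (pr.2 ≠ ∅ ∧ Sat φ₂ .EA pr.2)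
  | .conj φ₁ φ₂, .AE, 𝔄 =>
      ∀ pr ∈ par (hdual 𝔄), (pr.1 ≠ ∅ ∧ Sat φ₁ .EA pr.1) ∨ (pr.2 ≠ ∅ ∧ Sat φ₂ .EA pr.2)
  | .disj φ₁ φ₂, .AE, 𝔄 =>
      ∃ pr ∈ par 𝔄, (pr.1 ≠ ∅ → Sat φ₁ .AE pr.1) ∧ (pr.2 ≠ ∅ → Sat φ₂ .AE pr.2)
  | .disj φ₁ φ₂, .EA, 𝔄 =>
      ∃ pr ∈ par (hdual 𝔄), (pr.1 ≠ ∅ → Sat φ₁ .AE pr.1) ∧ (pr.2 ≠ ∅ → Sat φ₂ .AE pr.2)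
  | .ex p ς φ, .EA, 𝔄 => Sat φ .EA (extSpec ς 𝔄 p)
  | .ex p ς φ, .AE, 𝔄 => Sat φ .EA (extSpec ς (hdual 𝔄) p)
  | .all p ς φ, .AE, 𝔄 => Sat φ .AE (extSpec ς 𝔄 p)
  | .all p ς φ, .EA, 𝔄 => Sat φ .AE (extSpec ς (hdual 𝔄) p)

section Aux

variable {X : Type*}

lemma hle_ne {A B : Set (Set X)} (h : hle A B) (hA : A ≠ ∅) : B ≠ ∅ := by
  obtain ⟨W, hW⟩ := Set.nonempty_iff_ne_empty.2 hA
  obtain ⟨W', hW', -⟩ := h W hW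
  exact Set.nonempty_iff_ne_empty.1 ⟨W', hW'⟩

lemma hdual_anti {A B : Set (Set X)} (h : hle A B) : hle (hdual B) (hdual A) := by
  classical
  rintro Y ⟨ϑ, hϑ, rfl⟩
  set g : Set X → Set X := fun W => if hW : W ∈ A then (h W hW).choose else W with hg
  have hg1 : ∀ W ∈ A, g W ∈ B ∧ g W ⊆ W := by
    intro W hW
    simp only [hg, dif_pos hW]
    exact (h W hW).choose_spec
  refine ⟨(fun W => ϑ (g W)) '' A, ⟨fun W => ϑ (g W), ?_, rfl⟩, ?_⟩
  · intro W hW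
    exact (hg1 W hW).2 (hϑ _ (hg1 W hW).1)
  · rintro y ⟨W, hW, rfl⟩
    exact ⟨g W, (hg1 W hW).1, rfl⟩

lemma par_pull {A B : Set (Set X)} (h : hle A B) {pr : Set (Set X) × Set (Set X)}
    (hpr : pr ∈ par B) :
    ∃ qr ∈ par A, hle qr.1 pr.1 ∧ hle qr.2 pr.2 := by
  classical
  obtain ⟨hunion, hdisj⟩ := hpr
  set g : Set X → Set X := fun W => if hW : W ∈ A then (h W hW).choose else W with hg
  have hg1 : ∀ W ∈ A, g W ∈ B ∧ g W ⊆ W := by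
    intro W hW
    simp only [hg, dif_pos hW]
    exact (h W hW).choose_spec
  refine ⟨({W ∈ A | g W ∈ pr.1}, {W ∈ A | g W ∉ pr.1}), ⟨?_, ?_⟩, ?_, ?_⟩
  · ext W
    constructor
    · rintro (⟨hW, -⟩ | ⟨hW, -⟩) <;> exact hW
    · intro hW
      by_cases hc : g W ∈ pr.1
      · exact Or.inl ⟨hW, hc⟩
      · exact Or.inr ⟨hW, hc⟩
  · rw [Set.disjoint_left]
    rintro W ⟨-, h1⟩ ⟨-, h2⟩
    exact h2 h1
  · rintro W ⟨hWA, hWp⟩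
    exact ⟨g W, hWp, (hg1 W hWA).2⟩
  · rintro W ⟨hWA, hWp⟩
    have hB : g W ∈ pr.1 ∪ pr.2 := hunion ▸ (hg1 W hWA).1
    rcases hB with hB | hB
    · exact absurd hB hWp
    · exact ⟨g W, hB, (hg1 W hWA).2⟩

lemma forall_par_mono {A B : Set (Set X)} (h : hle A B)
    {S₁ S₂ : Set (Set X) → Prop}
    (m₁ : ∀ ⦃U V : Set (Set X)⦄, hle U V → S₁ U → S₁ V)
    (m₂ : ∀ ⦃U V : Set (Set X)⦄, hle U V → S₂ U → S₂ V)
    (hs : ∀ pr ∈ par A, (pr.1 ≠ ∅ ∧ S₁ pr.1) ∨ (pr.2 ≠ ∅ ∧ S₂ pr.2)) :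
    ∀ pr ∈ par B, (pr.1 ≠ ∅ ∧ S₁ pr.1) ∨ (pr.2 ≠ ∅ ∧ S₂ pr.2) := by
  intro pr hpr
  obtain ⟨qr, hqr, h1, h2⟩ := par_pull h hpr
  rcases hs qr hqr with ⟨hne, hS⟩ | ⟨hne, hS⟩
  · exact Or.inl ⟨hle_ne h1 hne, m₁ h1 hS⟩
  · exact Or.inr ⟨hle_ne h2 hne, m₂ h2 hS⟩

lemma exists_par_anti {A B : Set (Set X)} (h : hle A B)
    {S₁ S₂ : Set (Set X) → Prop}
    (m₁ : ∀ ⦃U V : Set (Set X)⦄, hle U V → S₁ V → S₁ U)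
    (m₂ : ∀ ⦃U V : Set (Set X)⦄, hle U V → S₂ V → S₂ U)
    (hs : ∃ pr ∈ par B, (pr.1 ≠ ∅ → S₁ pr.1) ∧ (pr.2 ≠ ∅ → S₂ pr.2)) :
    ∃ pr ∈ par A, (pr.1 ≠ ∅ → S₁ pr.1) ∧ (pr.2 ≠ ∅ → S₂ pr.2) := by
  obtain ⟨pr, hpr, hs1, hs2⟩ := hs
  obtain ⟨qr, hqr, h1, h2⟩ := par_pull h hpr
  exact ⟨qr, hqr, fun hne => m₁ h1 (hs1 (hle_ne h1 hne)),
    fun hne => m₂ h2 (hs2 (hle_ne h2 hne))⟩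

end Aux

lemma extSpec_mono {A B : Set (Set (Asg AP))} (h : hle A B) (ς : Spec AP) (p : AP) :
    hle (extSpec ς A p) (extSpec ς B p) := by
  rintro Y ⟨W, hW, F, hF, rfl⟩
  obtain ⟨W', hW', hsub⟩ := h W hW
  exact ⟨extSet W' F p, ⟨W', hW', F, hF, rfl⟩, Set.image_mono hsub⟩

theorem sat_mono (φ : Formula AP) :
    ∀ 𝔄 𝔅 : Set (Set (Asg AP)), hle 𝔄 𝔅 →
      (Sat φ .EA 𝔄 → Sat φ .EA 𝔅) ∧ (Sat φ .AE 𝔅 → Sat φ .AE 𝔄) := by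
  induction φ with
  | atom Ψ =>
    intro 𝔄 𝔅 h
    constructor
    · rintro ⟨W, hW, hWΨ⟩
      obtain ⟨W', hW', hsub⟩ := h W hW
      exact ⟨W', hW', hsub.trans hWΨ⟩
    · intro hs W hW
      obtain ⟨W', hW', hsub⟩ := h W hW
      have := hs W' hW'
      intro hempty
      exact this (Set.subset_empty_iff.1 (hempty ▸ Set.inter_subset_inter_left Ψ hsub))
  | neg φ ih =>
    intro 𝔄 𝔅 h
    exact ⟨fun hs hc => hs ((ih 𝔄 𝔅 h).2 hc), fun hs hc => hs ((ih 𝔄 𝔅 h).1 hc)⟩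
  | conj φ₁ φ₂ ih₁ ih₂ =>
    intro 𝔄 𝔅 h
    constructor
    · exact forall_par_mono h (fun U V hUV => (ih₁ U V hUV).1)
        (fun U V hUV => (ih₂ U V hUV).1)
    · exact forall_par_mono (hdual_anti h) (fun U V hUV => (ih₁ U V hUV).1)
        (fun U V hUV => (ih₂ U V hUV).1)
  | disj φ₁ φ₂ ih₁ ih₂ =>
    intro 𝔄 𝔅 h
    constructor
    · exact exists_par_anti (hdual_anti h) (fun U V hUV => (ih₁ U V hUV).2)
        (fun U V hUV => (ih₂ U V hUV).2)
    · exact exists_par_anti h (fun U V hUV => (ih₁ U V hUV).2)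
        (fun U V hUV => (ih₂ U V hUV).2)
  | ex p ς φ ih =>
    intro 𝔄 𝔅 h
    constructor
    · exact (ih _ _ (extSpec_mono h ς p)).1
    · exact (ih _ _ (extSpec_mono (hdual_anti h) ς p)).1
  | all p ς φ ih =>
    intro 𝔄 𝔅 h
    constructor
    · exact (ih _ _ (extSpec_mono (hdual_anti h) ς p)).2
    · exact (ih _ _ (extSpec_mono h ς p)).2

/-- Corollary 1 (Hyperassignment Equivalence). -/
theorem hyperassignment_equivalence (φ : Formula AP)
    (𝔄₁ 𝔄₂ : Set (Set (Asg AP))) (h₁ : IsHyp 𝔄₁) (h₂ : IsHyp 𝔄₂)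
    (h : heqv 𝔄₁ 𝔄₂) (α : Flag) :
    Sat φ α 𝔄₁ ↔ Sat φ α 𝔄₂ := by
  obtain ⟨h₁₂, h₂₁⟩ := h
  cases α with
  | EA => exact ⟨(sat_mono φ 𝔄₁ 𝔄₂ h₁₂).1, (sat_mono φ 𝔄₂ 𝔄₁ h₂₁).1⟩
  | AE => exact ⟨(sat_mono φ 𝔄₂ 𝔄₁ h₂₁).2, (sat_mono φ 𝔄₁ 𝔄₂ h₁₂).2⟩

end GFG
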